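/- The partially annealed mean number of returns to the origin of the random walk in sparse random environment with drift f equals the grand canonical partition function of the pinning model: E_τ[E_{V}^{ω,τ}(card{n ≥ 0 : X_n = 0})] = Σ_{n ≥ 0} Z_{n,ω}^{β,h} e^{-fn}, where the potential is ΔV_i = (h + βω_i)1_{i ∈ τ} − f for i ≥ 1 and is extended symmetrically about −1/2. -/

import Mathlib

open MeasureTheory
open scoped ENNReal NNReal

/-- Probability of a step from `i` to `j` for the random walk in potential `V`:
`p(i,i+1) = 1/(1+exp(V i - V (i-1)))`, `p(i,i-1) = 1 - p(i,i+1)`, `0` otherwise. -/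
noncomputable def stepProb (V : ℤ → ℝ) (i j : ℤ) : ℝ :=
  if j = i + 1 then 1 / (1 + Real.exp (V i - V (i - 1)))
  else if j = i - 1 then 1 - 1 / (1 + Real.exp (V i - V (i - 1)))
  else 0

/-- `P b` is the law of the nearest-neighbour Markov chain on `ℤ` started at `b`
with transition probabilities `stepProb V`, characterized through its
finite-dimensional distributions. -/
def IsRWInPotential (V : ℤ → ℝ) (P : ℤ → Measure (ℕ → ℤ)) : Prop :=
  (∀ b, IsProbabilityMeasure (P b)) ∧
  ∀ (b : ℤ) (n : ℕ) (x : ℕ → ℤ), x 0 = b →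
    (P b {w | ∀ k ≤ n, w k = x k}).toReal
      = ∏ k ∈ Finset.range n, stepProb V (x k) (x (k + 1))

/-- The scale function `W`: `W 0 = 0`, `W n = ∑_{0 ≤ k < n} e^{V k}` for `n ≥ 1`,
`W (-n) = -∑_{1 ≤ k ≤ n} e^{V (-k)}` for `n ≥ 1`. -/
noncomputable def Wfun (V : ℤ → ℝ) (z : ℤ) : ℝ :=
  if 0 ≤ z then ∑ k ∈ Finset.range z.toNat, Real.exp (V (k : ℤ))
  else -∑ k ∈ Finset.range (-z).toNat, Real.exp (V (-((k : ℤ) + 1)))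

/-- Entrance time `H_a = inf {n ≥ 1 : X_n = a}`, with value `⊤` if no such time exists. -/
noncomputable def entranceTime (a : ℤ) (w : ℕ → ℤ) : ℕ∞ :=
  sInf ((fun m : ℕ => (m : ℕ∞)) '' {m : ℕ | 1 ≤ m ∧ w m = a})

/-- Hitting time `H̃_a = inf {n ≥ 0 : X_n = a}`, with value `⊤` if no such time exists. -/
noncomputable def hittingTime (a : ℤ) (w : ℕ → ℤ) : ℕ∞ :=
  sInf ((fun m : ℕ => (m : ℕ∞)) '' {m : ℕ | w m = a})

/-- Number of visits of the path `w` to the site `a`, as an extended nonnegative real. -/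
noncomputable def numVisits (a : ℤ) (w : ℕ → ℤ) : ℝ≥0∞ :=
  ∑' n : ℕ, if w n = a then (1 : ℝ≥0∞) else 0

/-- Value of the sparse potential at a nonnegative site `n`:
`V_n = ∑_{i=1}^n ((h + β ω_i) 1_{i ∈ τ} - f)`. -/
noncomputable def sparsePotNat (β h f : ℝ) (ω : ℕ → ℝ) (t : ℕ → ℕ) (n : ℕ) : ℝ :=
  ∑ i ∈ Finset.Icc 1 n,
    ((h + β * ω i) * Set.indicator (Set.range t) (fun _ => (1 : ℝ)) i - f)

/-- The sparse potential on `ℤ`, extended symmetrically about `-1/2`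
(`V_{-i-1} = V_i`, i.e. the symmetric extension normalized by `V_{-1} = 0`). -/
noncomputable def sparsePot (β h f : ℝ) (ω : ℕ → ℝ) (t : ℕ → ℕ) (z : ℤ) : ℝ :=
  if 0 ≤ z then sparsePotNat β h f ω t z.toNat
  else sparsePotNat β h f ω t (-(z + 1)).toNat

section Basics

variable (V : ℤ → ℝ)

lemma one_add_exp_pos (x : ℝ) : (0:ℝ) < 1 + Real.exp x := by positivity

lemma stepProb_nonneg (i j : ℤ) : 0 ≤ stepProb V i j := by
  unfold stepProb
  split_ifs with h1 h2
  · positivity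
  · have he := Real.exp_pos (V i - V (i-1))
    have : 1 / (1 + Real.exp (V i - V (i-1))) ≤ 1 := by
      rw [div_le_one (by linarith)]; linarith
    linarith
  · exact le_refl _

lemma stepProb_le_one (i j : ℤ) : stepProb V i j ≤ 1 := by
  unfold stepProb
  have he := Real.exp_pos (V i - V (i-1))
  split_ifs with h1 h2
  · rw [div_le_one (by linarith)]; linarith
  · have : 0 ≤ 1 / (1 + Real.exp (V i - V (i-1))) := by positivity
    linarith
  · norm_num

lemma stepProb_up (i : ℤ) : stepProb V i (i+1) = 1 / (1 + Real.exp (V i - V (i - 1))) := by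
  unfold stepProb; simp

lemma stepProb_down (i : ℤ) : stepProb V i (i-1) = 1 - 1 / (1 + Real.exp (V i - V (i - 1))) := by
  unfold stepProb
  rw [if_neg (by omega), if_pos rfl]

lemma stepProb_other (i j : ℤ) (h1 : j ≠ i + 1) (h2 : j ≠ i - 1) : stepProb V i j = 0 := by
  unfold stepProb; rw [if_neg h1, if_neg h2]

lemma stepProb_up_pos (i : ℤ) : 0 < stepProb V i (i+1) := by
  rw [stepProb_up]; positivity

lemma stepProb_down_pos (i : ℤ) : 0 < stepProb V i (i-1) := by
  rw [stepProb_down]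
  have he := Real.exp_pos (V i - V (i-1))
  have h : (1:ℝ) < 1 + Real.exp (V i - V (i-1)) := by linarith
  have : 1 / (1 + Real.exp (V i - V (i-1))) < 1 := by
    rw [div_lt_one (by linarith)]; linarith
  linarith

lemma stepProb_add (i : ℤ) : stepProb V i (i+1) + stepProb V i (i-1) = 1 := by
  rw [stepProb_up, stepProb_down]; ring

/-- ratio identity: q_i = p_i * exp(V i - V (i-1)) -/
lemma stepProb_ratio (i : ℤ) :
    stepProb V i (i-1) = stepProb V i (i+1) * Real.exp (V i - V (i-1)) := by
  rw [stepProb_up, stepProb_down]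
  have h := one_add_exp_pos (V i - V (i-1))
  field_simp
  ring

end Basics

noncomputable def wgt (V : ℤ → ℝ) (i j : ℤ) : ℝ≥0∞ := ENNReal.ofReal (stepProb V i j)

noncomputable def pathW (V : ℤ → ℝ) : ℤ → List ℤ → ℝ≥0∞
  | _, [] => 1
  | a, b :: l => wgt V a b * pathW V b l

/-- position at time `k` of the path starting at `a` with subsequent positions `l` -/
def seq (a : ℤ) (l : List ℤ) (k : ℕ) : ℤ := (a :: l).getD k 0

@[simp] lemma seq_zero (a : ℤ) (l : List ℤ) : seq a l 0 = a := rfl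

@[simp] lemma seq_succ (a b : ℤ) (l : List ℤ) (k : ℕ) :
    seq a (b :: l) (k+1) = seq b l k := rfl

lemma seq_append (a : ℤ) (l s : List ℤ) (k : ℕ) (hk : k ≤ l.length) :
    seq a (l ++ s) k = seq a l k := by
  cases k with
  | zero => rfl
  | succ k =>
    simp only [seq, List.getD_cons_succ]
    rw [List.getD_eq_getElem?_getD, List.getD_eq_getElem?_getD, List.getElem?_append,
      if_pos (by omega)]

lemma pathW_append (V : ℤ → ℝ) (a : ℤ) (l s : List ℤ) :
    pathW V a (l ++ s) = pathW V a l * pathW V (seq a l l.length) s := by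
  induction l generalizing a with
  | nil => simp [pathW, seq]
  | cons b t ih =>
    show wgt V a b * pathW V b (t ++ s) = _
    rw [ih b]
    simp only [pathW, seq_succ, List.length_cons]
    ring

lemma seq_length_cons (a b : ℤ) (l : List ℤ) :
    seq a (b :: l) (b :: l).length = seq b l l.length := rfl

 section S3

variable (V : ℤ → ℝ)

lemma wgt_ne_top (i j : ℤ) : wgt V i j ≠ ⊤ := ENNReal.ofReal_ne_top

lemma wgt_le_one (i j : ℤ) : wgt V i j ≤ 1 := by
  rw [wgt, ← ENNReal.ofReal_one]
  exact ENNReal.ofReal_le_ofReal (stepProb_le_one V i j)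

lemma wgt_other (i j : ℤ) (h1 : j ≠ i + 1) (h2 : j ≠ i - 1) : wgt V i j = 0 := by
  rw [wgt, stepProb_other V i j h1 h2, ENNReal.ofReal_zero]

lemma wgt_add (i : ℤ) : wgt V i (i+1) + wgt V i (i-1) = 1 := by
  rw [wgt, wgt, ← ENNReal.ofReal_add (stepProb_nonneg V i _) (stepProb_nonneg V i _),
    stepProb_add, ENNReal.ofReal_one]

lemma wgt_ne_zero_iff (i j : ℤ) : wgt V i j ≠ 0 ↔ (j = i + 1 ∨ j = i - 1) := by
  constructor
  · intro h
    by_contra hc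
    push_neg at hc
    exact h (wgt_other V i j hc.1 hc.2)
  · rintro (rfl | rfl)
    · simp [wgt, ENNReal.ofReal_eq_zero, not_le, stepProb_up_pos V i]
    · simp [wgt, ENNReal.ofReal_eq_zero, not_le, stepProb_down_pos V i]

/-- adjacency symmetry of the environment under reflection at 0 -/
lemma stepProb_neg (hsym : ∀ z : ℤ, V (-1 - z) = V z) (i j : ℤ) :
    stepProb V (-i) (-j) = stepProb V i j := by
  have hVi : V (-i) = V (i - 1) := by rw [show -i = -1 - (i-1) by ring, hsym]
  have hVi' : V (-i - 1) = V i := by rw [show -i - 1 = -1 - i by ring, hsym]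
  rcases eq_or_ne j (i+1) with rfl | h1
  · rw [show -(i+1) = -i - 1 by ring, stepProb_down, stepProb_up, hVi, hVi']
    rw [show V i - V (i-1) = -(V (i-1) - V i) by ring, Real.exp_neg]
    have he := Real.exp_pos (V (i-1) - V i)
    field_simp
    ring
  · rcases eq_or_ne j (i-1) with rfl | h2
    · rw [show -(i-1) = -i + 1 by ring, stepProb_up, stepProb_down, hVi, hVi']
      rw [show V i - V (i-1) = -(V (i-1) - V i) by ring, Real.exp_neg]
      have he := Real.exp_pos (V (i-1) - V i)
      field_simp
      ring
    · rw [stepProb_other V i j h1 h2, stepProb_other V (-i) (-j) (by omega) (by omega)]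

lemma wgt_neg (hsym : ∀ z : ℤ, V (-1 - z) = V z) (i j : ℤ) :
    wgt V (-i) (-j) = wgt V i j := by rw [wgt, wgt, stepProb_neg V hsym]

lemma pathW_neg (hsym : ∀ z : ℤ, V (-1 - z) = V z) (a : ℤ) (l : List ℤ) :
    pathW V (-a) (l.map (fun x => -x)) = pathW V a l := by
  induction l generalizing a with
  | nil => rfl
  | cons b t ih => simp only [List.map_cons, pathW, wgt_neg V hsym, ih b]

/-- nonzero weight forces nearest-neighbour steps -/
lemma pathW_ne_zero_chain (a : ℤ) (l : List ℤ) (h : pathW V a l ≠ 0) :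
    List.Chain (fun x y => y = x + 1 ∨ y = x - 1) a l := by
  induction l generalizing a with
  | nil => exact List.Chain.nil
  | cons b t ih =>
    rw [pathW, mul_ne_zero_iff] at h
    exact List.Chain.cons ((wgt_ne_zero_iff V a b).mp h.1) (ih b h.2)

/-- pathW as ofReal of the product of stepProbs along `seq` -/
lemma pathW_eq_ofReal_prod (a : ℤ) (l : List ℤ) :
    pathW V a l
      = ENNReal.ofReal (∏ k ∈ Finset.range l.length, stepProb V (seq a l k) (seq a l (k+1))) := by
  induction l generalizing a with
  | nil => simp [pathW]
  | cons b t ih =>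
    rw [List.length_cons, Finset.prod_range_succ']
    simp only [seq_succ, seq_zero]
    rw [ENNReal.ofReal_mul' (stepProb_nonneg V a b)]
    rw [pathW, ih b, mul_comm]
    rfl

end S3

section Cylinders
variable (V : ℤ → ℝ) (P : ℤ → Measure (ℕ → ℤ))

/-- the cylinder set of paths following `a :: l` up to time `l.length` -/
def cyl (a : ℤ) (l : List ℤ) : Set (ℕ → ℤ) := {w | ∀ k ≤ l.length, w k = seq a l k}

lemma measurableSet_cyl (a : ℤ) (l : List ℤ) : MeasurableSet (cyl a l) := by
  have h : cyl a l = ⋂ k ∈ Set.Iic l.length, (fun w : ℕ → ℤ => w k) ⁻¹' {seq a l k} := by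
    ext w; simp [cyl]
  rw [h]
  exact MeasurableSet.biInter (Set.to_countable _)
    (fun k _ => (measurable_pi_apply k) (measurableSet_singleton _))

lemma meas_cyl (hP : IsRWInPotential V P) (a : ℤ) (l : List ℤ) :
    P a (cyl a l) = pathW V a l := by
  have := hP.1 a
  have h := hP.2 a l.length (seq a l) rfl
  have hne : P a (cyl a l) ≠ ⊤ := measure_ne_top _ _
  have hset : {w : ℕ → ℤ | ∀ k ≤ l.length, w k = seq a l k} = cyl a l := rfl
  rw [hset] at h
  rw [pathW_eq_ofReal_prod, ← h, ENNReal.ofReal_toReal hne]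

lemma seq_agree_prefix (a : ℤ) (l₁ l₂ : List ℤ)
    (h : ∀ k ≤ l₁.length, seq a l₁ k = seq a l₂ k) (hlen : l₁.length ≤ l₂.length) :
    l₁ <+: l₂ := by
  induction l₁ generalizing l₂ a with
  | nil => exact List.nil_prefix
  | cons b t ih =>
    cases l₂ with
    | nil => simp at hlen
    | cons b₂ t₂ =>
      have hb : b = b₂ := by
        have := h 1 (by simp)
        simpa using this
      subst hb
      have ht : t <+: t₂ :=
        ih b t₂ (fun k hk => by simpa using h (k+1) (by simpa using hk))
          (by simpa using hlen)
      exact List.cons_prefix_cons.mpr ⟨rfl, ht⟩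

lemma cyl_disjoint (a : ℤ) (l₁ l₂ : List ℤ) (h12 : ¬ l₁ <+: l₂) (h21 : ¬ l₂ <+: l₁) :
    Disjoint (cyl a l₁) (cyl a l₂) := by
  rw [Set.disjoint_left]
  intro w hw1 hw2
  rcases le_total l₁.length l₂.length with hle | hle
  · exact h12 (seq_agree_prefix a l₁ l₂
      (fun k hk => by rw [← hw1 k hk, hw2 k (le_trans hk hle)]) hle)
  · exact h21 (seq_agree_prefix a l₂ l₁
      (fun k hk => by rw [← hw2 k hk, hw1 k (le_trans hk hle)]) hle)

/-- a prefix-free family of paths has total weight at most 1 -/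
lemma tsum_pathW_le_one (hP : IsRWInPotential V P) (a : ℤ) (Λ : Set (List ℤ))
    (hpf : ∀ l₁ ∈ Λ, ∀ l₂ ∈ Λ, l₁ <+: l₂ → l₁ = l₂) :
    ∑' l : Λ, pathW V a l ≤ 1 := by
  have := hP.1 a
  have hd : Pairwise (Function.onFun Disjoint fun l : Λ => cyl a l) := by
    intro l₁ l₂ hne
    exact cyl_disjoint a l₁ l₂
      (fun hp => hne (Subtype.ext (hpf _ l₁.2 _ l₂.2 hp)))
      (fun hp => hne (Subtype.ext (hpf _ l₂.2 _ l₁.2 hp).symm))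
  calc ∑' l : Λ, pathW V a l = ∑' l : Λ, P a (cyl a l) := by
        exact tsum_congr fun l => (meas_cyl V P hP a l).symm
    _ = P a (⋃ l : Λ, cyl a l) := (measure_iUnion hd (fun l => measurableSet_cyl a l)).symm
    _ ≤ 1 := prob_le_one

/-- the law of `X_n` through path sums -/
lemma meas_eq_tsum_pathW (hP : IsRWInPotential V P) (n : ℕ) :
    P 0 {w | w n = 0}
      = ∑' l : {l : List ℤ // l.length = n ∧ seq 0 l n = 0}, pathW V 0 l := by
  have := hP.1 (0 : ℤ)
  have h0 : P 0 {w | w 0 = (0:ℤ)} = 1 := by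
    have : {w : ℕ → ℤ | w 0 = 0} = cyl 0 [] := by
      ext w; simp [cyl, Nat.le_zero, seq]
    rw [this, meas_cyl V P hP]; rfl
  have hms : MeasurableSet {w : ℕ → ℤ | w 0 = (0:ℤ)} :=
    (measurable_pi_apply 0) (measurableSet_singleton 0)
  have hnull : P 0 {w : ℕ → ℤ | w 0 ≠ (0:ℤ)} = 0 := by
    have := prob_compl_eq_zero_iff hms |>.mpr h0
    simpa [Set.compl_setOf] using this
  set A := {w : ℕ → ℤ | w n = 0} with hA
  have hAint : P 0 A = P 0 (A ∩ {w | w 0 = (0:ℤ)}) := by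
    have hsub : P 0 (A ∩ {w | w 0 = (0:ℤ)}ᶜ) = 0 :=
      measure_mono_null Set.inter_subset_right (by simpa [Set.compl_setOf] using hnull)
    have := measure_inter_add_diff (μ := P 0) A hms
    rw [Set.diff_eq, hsub] at this
    simpa using this.symm
  have hcover : A ∩ {w | w 0 = (0:ℤ)}
      = ⋃ l : {l : List ℤ // l.length = n ∧ seq 0 l n = 0}, cyl 0 l := by
    ext w
    constructor
    · rintro ⟨hwn, hw0⟩
      refine Set.mem_iUnion.mpr ?_
      have hseq : ∀ k ≤ n, seq 0 ((List.range n).map (fun k => w (k+1))) k = w k := by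
        intro k hk
        cases k with
        | zero => simpa [seq] using hw0.symm
        | succ k =>
          have hk' : k < n := by omega
          simp only [seq, List.getD_cons_succ]
          rw [List.getD_eq_getElem?_getD, List.getElem?_map, List.getElem?_range hk']
          rfl
      refine ⟨⟨(List.range n).map (fun k => w (k+1)), by simp, ?_⟩, ?_⟩
      · rw [hseq n le_rfl]; exact hwn
      · intro k hk
        rw [hseq k (by simpa using hk)]
    · rintro hw
      rcases Set.mem_iUnion.mp hw with ⟨⟨l, hlen, hlast⟩, hwl⟩
      constructor
      · have := hwl n (le_of_eq hlen.symm)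
        simpa [hlast, hA] using this
      · have := hwl 0 (Nat.zero_le _)
        simpa [seq] using this
  have hd : Pairwise (Function.onFun Disjoint
      fun l : {l : List ℤ // l.length = n ∧ seq 0 l n = 0} => cyl 0 l) := by
    intro l₁ l₂ hne
    have hne' : (l₁ : List ℤ) ≠ l₂ := fun h => hne (Subtype.ext h)
    have hpre : ∀ (p q : List ℤ), p.length = n → q.length = n → p ≠ q → ¬ p <+: q := by
      intro p q hp hq hpq hcon
      exact hpq (hcon.eq_of_length (hp.trans hq.symm))
    exact cyl_disjoint 0 l₁ l₂
      (hpre _ _ l₁.2.1 l₂.2.1 hne')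
      (hpre _ _ l₂.2.1 l₁.2.1 hne'.symm)
  rw [hAint, hcover, measure_iUnion hd (fun l => measurableSet_cyl 0 l)]
  exact tsum_congr fun l => meas_cyl V P hP 0 l

end Cylinders

section Hit
variable (V : ℤ → ℝ)

/-- `l` is, starting from `i`, a path hitting `0` at its end, staying in `E` before that -/
def HitP (E : Set ℤ) (i : ℤ) (l : List ℤ) : Prop :=
  seq i l l.length = 0 ∧ ∀ k < l.length, seq i l k ∈ E

/-- `l` is, starting from `i`, a path ending at `0` -/
def RetP (i : ℤ) (l : List ℤ) : Prop := seq i l l.length = 0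

noncomputable def HitSum (E : Set ℤ) (i : ℤ) : ℝ≥0∞ :=
  ∑' l : {l : List ℤ // HitP E i l}, pathW V i l

lemma HitP_nil (E : Set ℤ) (i : ℤ) : HitP E i [] ↔ i = 0 := by
  simp [HitP, seq]

lemma HitP_cons (E : Set ℤ) (i c : ℤ) (l : List ℤ) :
    HitP E i (c :: l) ↔ i ∈ E ∧ HitP E c l := by
  constructor
  · rintro ⟨hend, hmem⟩
    exact ⟨by simpa using hmem 0 (by simp), by simpa using hend,
      fun k hk => by simpa using hmem (k+1) (by simpa using hk)⟩
  · rintro ⟨hi, hend, hmem⟩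
    refine ⟨by simpa using hend, fun k hk => ?_⟩
    cases k with
    | zero => simpa using hi
    | succ k => simpa using hmem k (by simpa using hk)

def hitSplitEquiv (E : Set ℤ) (h0 : (0:ℤ) ∉ E) (i : ℤ) (hi : i ∈ E) :
    {l : List ℤ // HitP E i l} ≃ Σ c : ℤ, {l : List ℤ // HitP E c l} where
  toFun x := match x with
    | ⟨[], hl⟩ => absurd (((HitP_nil E i).mp hl) ▸ hi) h0
    | ⟨c :: l, hl⟩ => ⟨c, l, ((HitP_cons E i c l).mp hl).2⟩
  invFun y := ⟨y.1 :: y.2.1, (HitP_cons E i y.1 y.2.1).mpr ⟨hi, y.2.2⟩⟩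
  left_inv := by
    rintro ⟨(_ | ⟨c, l⟩), hl⟩
    · exact absurd (((HitP_nil E i).mp hl) ▸ hi) h0
    · rfl
  right_inv := by rintro ⟨c, l, hl⟩; rfl

lemma HitSum_split (E : Set ℤ) (h0 : (0:ℤ) ∉ E) (i : ℤ) (hi : i ∈ E) :
    HitSum V E i = ∑' c : ℤ, wgt V i c * HitSum V E c := by
  have he := ((hitSplitEquiv E h0 i hi).symm.tsum_eq
    (fun l : {l : List ℤ // HitP E i l} => pathW V i l)).symm
  rw [HitSum, he, ENNReal.tsum_sigma']
  refine tsum_congr fun c => ?_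
  have hb : ∀ b : {l : List ℤ // HitP E c l},
      pathW V i ((((hitSplitEquiv E h0 i hi).symm ⟨c, b⟩) : {l : List ℤ // HitP E i l}) : List ℤ)
        = wgt V i c * pathW V c b := fun b => rfl
  rw [tsum_congr hb, ENNReal.tsum_mul_left, HitSum]

lemma HitSum_zero (E : Set ℤ) (h0 : (0:ℤ) ∉ E) : HitSum V E 0 = 1 := by
  have hnil : HitP E 0 ([] : List ℤ) := (HitP_nil E 0).mpr rfl
  rw [HitSum, tsum_eq_single (⟨[], hnil⟩ : {l : List ℤ // HitP E 0 l})]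
  · rfl
  · rintro ⟨(_ | ⟨c, l⟩), hl⟩ hne
    · exact absurd (Subtype.ext rfl) hne
    · exact absurd (((HitP_cons E 0 c l).mp hl).1) h0

lemma HitSum_out (E : Set ℤ) (i : ℤ) (hi : i ∉ E) (hi0 : i ≠ 0) : HitSum V E i = 0 := by
  have : IsEmpty {l : List ℤ // HitP E i l} := by
    refine ⟨fun x => ?_⟩
    obtain ⟨(_ | ⟨c, l⟩), hl⟩ := x
    · exact hi0 ((HitP_nil E i).mp hl)
    · exact hi (((HitP_cons E i c l).mp hl).1)
  rw [HitSum, tsum_empty]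

lemma HitSum_rec (E : Set ℤ) (h0 : (0:ℤ) ∉ E) (i : ℤ) (hi : i ∈ E) :
    HitSum V E i = wgt V i (i+1) * HitSum V E (i+1) + wgt V i (i-1) * HitSum V E (i-1) := by
  rw [HitSum_split V E h0 i hi]
  rw [tsum_eq_sum (s := {i+1, i-1}) ?_]
  · rw [Finset.sum_pair (by omega)]
  · intro c hc
    simp only [Finset.mem_insert, Finset.mem_singleton] at hc
    push_neg at hc
    rw [wgt_other V i c hc.1 hc.2, zero_mul]

lemma HitSum_mono (E E' : Set ℤ) (hEE : E ⊆ E') (i : ℤ) : HitSum V E i ≤ HitSum V E' i := by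
  refine Summable.tsum_le_tsum_of_inj
    (fun l : {l : List ℤ // HitP E i l} =>
      (⟨l.1, l.2.1, fun k hk => hEE (l.2.2 k hk)⟩ : {l : List ℤ // HitP E' i l}))
    (fun a b hab => by
      apply Subtype.ext
      have := congrArg Subtype.val hab
      simpa using this)
    (fun c _ => zero_le) (fun l => le_rfl) ENNReal.summable ENNReal.summable

lemma HitP_prefix_free (E : Set ℤ) (h0 : (0:ℤ) ∉ E) (i : ℤ) (l₁ l₂ : List ℤ)
    (h1 : HitP E i l₁) (h2 : HitP E i l₂) (hp : l₁ <+: l₂) : l₁ = l₂ := by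
  obtain ⟨s, rfl⟩ := hp
  cases s with
  | nil => simp
  | cons c t =>
    exfalso
    have hlt : l₁.length < (l₁ ++ c :: t).length := by simp
    have := h2.2 l₁.length hlt
    rw [seq_append i l₁ (c :: t) l₁.length le_rfl, h1.1] at this
    exact h0 this

lemma HitSum_le_one (P : ℤ → Measure (ℕ → ℤ)) (hP : IsRWInPotential V P)
    (E : Set ℤ) (h0 : (0:ℤ) ∉ E) (i : ℤ) : HitSum V E i ≤ 1 := by
  exact tsum_pathW_le_one V P hP i {l | HitP E i l}
    (fun l₁ h1 l₂ h2 hp => HitP_prefix_free E h0 i l₁ l₂ h1 h2 hp)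

end Hit

section Ruin
variable (V : ℤ → ℝ)

def Epos : Set ℤ := {x | x ≠ 0}

def Ebox (N : ℕ) : Set ℤ := {x | 0 < x ∧ x < (N:ℤ)}

lemma zero_notmem_Epos : (0:ℤ) ∉ Epos := by simp [Epos]

lemma zero_notmem_Ebox (N : ℕ) : (0:ℤ) ∉ Ebox N := by simp [Ebox]

lemma Ebox_subset_Epos (N : ℕ) : Ebox N ⊆ Epos := fun x hx => by
  simp only [Ebox, Set.mem_setOf_eq] at hx
  simp [Epos]; omega

lemma Ebox_mono {N M : ℕ} (h : N ≤ M) : Ebox N ⊆ Ebox M := fun x hx => by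
  simp only [Ebox, Set.mem_setOf_eq] at hx ⊢
  omega

/-- scale partial sums -/
noncomputable def Wscale (N : ℕ) : ℝ := ∑ k ∈ Finset.range N, Real.exp (V (k:ℤ))

lemma Wscale_pos (N : ℕ) (hN : 1 ≤ N) : 0 < Wscale V N :=
  Finset.sum_pos (fun k _ => Real.exp_pos _) (by simp; omega)

/-- gambler's ruin: the hitting probability of `0` from `1` inside the box `[0,N]` -/
lemma ruin_formula (P : ℤ → Measure (ℕ → ℤ)) (hP : IsRWInPotential V P) (hV0 : V 0 = 0)
    (N : ℕ) (hN : 1 ≤ N) :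
    HitSum V (Ebox N) 1 = ENNReal.ofReal (1 - 1 / Wscale V N) := by
  set E := Ebox N
  have h0 : (0:ℤ) ∉ E := zero_notmem_Ebox N
  have hfin : ∀ z : ℤ, HitSum V E z ≠ ⊤ :=
    fun z => (lt_of_le_of_lt (HitSum_le_one V P hP E h0 z) ENNReal.one_lt_top).ne
  set y : ℕ → ℝ := fun i => (HitSum V E (i:ℤ)).toReal with hy
  have hy0 : y 0 = 1 := by
    simp only [hy, Nat.cast_zero, HitSum_zero V E h0, ENNReal.toReal_one]
  have hyN : y N = 0 := by
    simp only [hy, HitSum_out V E (N:ℤ) (by simp [E, Ebox]) (by exact_mod_cast Nat.one_le_iff_ne_zero.mp hN), ENNReal.toReal_zero]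
  have hrec : ∀ i : ℕ, 0 < i → i < N →
      y i = stepProb V (i:ℤ) ((i:ℤ)+1) * y (i+1) + stepProb V (i:ℤ) ((i:ℤ)-1) * y (i-1) := by
    intro i hi1 hiN
    have hmem : (i:ℤ) ∈ E := by simp [E, Ebox]; omega
    have h := HitSum_rec V E h0 (i:ℤ) hmem
    have hcast1 : ((i:ℤ)+1) = ((i+1:ℕ):ℤ) := by push_cast; ring
    have hcast2 : ((i:ℤ)-1) = ((i-1:ℕ):ℤ) := by
      have : (1:ℕ) ≤ i := hi1
      push_cast [this]; ring
    rw [hcast1, hcast2] at h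
    have := congrArg ENNReal.toReal h
    rw [ENNReal.toReal_add (ENNReal.mul_ne_top (wgt_ne_top V _ _) (hfin _))
        (ENNReal.mul_ne_top (wgt_ne_top V _ _) (hfin _)),
      ENNReal.toReal_mul, ENNReal.toReal_mul] at this
    simp only [wgt, ENNReal.toReal_ofReal (stepProb_nonneg V _ _)] at this
    rw [hy]
    rw [hcast1, hcast2]
    exact this
  set D : ℕ → ℝ := fun k => y k - y (k+1) with hD
  have hDrec : ∀ k : ℕ, k < N → D k = D 0 * Real.exp (V (k:ℤ)) := by
    intro k hk
    induction k with
    | zero => simp [hV0]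
    | succ k ih =>
      have hk' : k < N := by omega
      have hIH := ih hk'
      have hr := hrec (k+1) (Nat.succ_pos k) hk
      have hpq := stepProb_add V ((k+1:ℕ):ℤ)
      have hratio := stepProb_ratio V ((k+1:ℕ):ℤ)
      set p := stepProb V ((k+1:ℕ):ℤ) (((k+1:ℕ):ℤ)+1) with hp
      set q := stepProb V ((k+1:ℕ):ℤ) (((k+1:ℕ):ℤ)-1) with hq
      have hppos : 0 < p := stepProb_up_pos V _
      have hstep : D (k+1) * p = D k * q := by
        simp only [hD]
        have h1 : y (k+1) * (p + q) = p * y (k+2) + q * y k := by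
          rw [hpq, mul_one]
          simpa using hr
        ring_nf
        ring_nf at h1
        linarith
      have hcV : (((k+1:ℕ):ℤ)-1) = ((k:ℕ):ℤ) := by push_cast; ring
      rw [hratio, hcV] at hstep
      have : D (k+1) = D k * Real.exp (V ((k+1:ℕ):ℤ) - V ((k:ℕ):ℤ)) := by
        apply mul_right_cancel₀ (ne_of_gt hppos)
        rw [hstep]; ring
      rw [this, hIH, mul_assoc, ← Real.exp_add]
      ring_nf
  have htel : ∑ k ∈ Finset.range N, D k = 1 := by
    have := Finset.sum_range_sub' y N
    simp only [hD]
    rw [this, hy0, hyN]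
    ring
  have hD0 : D 0 * Wscale V N = 1 := by
    rw [← htel, Wscale, Finset.mul_sum]
    exact (Finset.sum_congr rfl fun k hk => by
      rw [hDrec k (Finset.mem_range.mp hk)]).symm
  have hWpos := Wscale_pos V N hN
  have hD0' : D 0 = 1 / Wscale V N := by
    field_simp at hD0 ⊢
    linarith
  have hy1 : y 1 = 1 - 1 / Wscale V N := by
    have : D 0 = y 0 - y 1 := rfl
    rw [hD0', hy0] at this
    linarith
  rw [show (1:ℤ) = ((1:ℕ):ℤ) by norm_num, ← ENNReal.ofReal_toReal (hfin ((1:ℕ):ℤ))]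
  rw [show (HitSum V E ((1:ℕ):ℤ)).toReal = y 1 from rfl, hy1]

end Ruin

section Exhaust
variable (V : ℤ → ℝ)

lemma chain_pos (i : ℤ) (l : List ℤ) (hch : List.Chain (fun x y => y = x + 1 ∨ y = x - 1) i l)
    (hi : 0 < i) (hne : ∀ k < l.length, seq i l k ≠ 0) :
    ∀ k < l.length, 0 < seq i l k := by
  induction l generalizing i with
  | nil => intro k hk; simp at hk
  | cons c t ih =>
    rcases List.chain_cons.mp hch with ⟨hadj, hct⟩
    intro k hk
    cases k with
    | zero => simpa using hi
    | succ k =>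
      have hk' : k < t.length := by simpa using hk
      rcases Nat.eq_zero_or_pos t.length with h0 | hpos
      · omega
      · have hc0 : c ≠ 0 := by
          have := hne 1 (by simp; omega)
          simpa using this
        have hcpos : 0 < c := by rcases hadj with rfl | rfl <;> omega
        have := ih c hct hcpos (fun m hm => by
          have := hne (m+1) (by simpa using hm)
          simpa using this) k hk'
        simpa using this

lemma seq_mem (i : ℤ) (l : List ℤ) (k : ℕ) (hk : k < l.length + 1) :
    seq i l k ∈ i :: l := by
  have : (i :: l).getD k 0 = (i :: l).get ⟨k, by simpa using hk⟩ := by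
    rw [List.getD_eq_getElem?_getD, List.getElem?_eq_getElem (by simpa using hk)]
    rfl
  rw [seq, this]
  exact List.get_mem _ _

lemma exists_box (l : List ℤ) (h : HitP Epos 1 l) (hw : pathW V 1 l ≠ 0) :
    ∃ N : ℕ, HitP (Ebox N) 1 l := by
  have hch := pathW_ne_zero_chain V 1 l hw
  have hpos := chain_pos 1 l hch one_pos (fun k hk => h.2 k hk)
  set M := ((1 :: l).map Int.natAbs).sum with hM
  refine ⟨M + 1, h.1, fun k hk => ?_⟩
  refine ⟨hpos k hk, ?_⟩
  have hmem : seq 1 l k ∈ (1:ℤ) :: l := seq_mem 1 l k (by omega)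
  have hbd : (seq 1 l k).natAbs ≤ M := by
    rw [hM]
    exact List.single_le_sum (fun x _ => Nat.zero_le x) _
      (List.mem_map_of_mem (f := Int.natAbs) hmem)
  have : seq 1 l k ≤ ((seq 1 l k).natAbs : ℤ) := Int.le_natAbs
  push_cast
  omega

lemma HitSum_sup (P : ℤ → Measure (ℕ → ℤ)) (hP : IsRWInPotential V P) :
    HitSum V Epos 1 = ⨆ N : ℕ, HitSum V (Ebox N) 1 := by
  apply le_antisymm
  · have hsub : HitSum V Epos 1
        = ∑' l : List ℤ, Set.indicator {l : List ℤ | HitP Epos 1 l} (pathW V 1) l := by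
      rw [HitSum]; exact tsum_subtype {l : List ℤ | HitP Epos 1 l} (fun l => pathW V 1 l)
    rw [hsub, ENNReal.tsum_eq_iSup_sum]
    apply iSup_le
    intro F
    have hbox : ∀ l : List ℤ, ∃ N : ℕ,
        HitP Epos 1 l → pathW V 1 l ≠ 0 → HitP (Ebox N) 1 l := by
      intro l
      by_cases h : HitP Epos 1 l ∧ pathW V 1 l ≠ 0
      · obtain ⟨N, hN⟩ := exists_box V l h.1 h.2
        exact ⟨N, fun _ _ => hN⟩
      · exact ⟨0, fun h1 h2 => absurd ⟨h1, h2⟩ h⟩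
    choose nb hnb using hbox
    set Nmax := F.sup nb with hNmax
    have hpt : ∀ l ∈ F, Set.indicator {l : List ℤ | HitP Epos 1 l} (pathW V 1) l
        ≤ Set.indicator {l : List ℤ | HitP (Ebox Nmax) 1 l} (pathW V 1) l := by
      intro l hl
      by_cases hS : HitP Epos 1 l
      · rw [Set.indicator_of_mem (show l ∈ {l : List ℤ | HitP Epos 1 l} from hS)]
        by_cases hw : pathW V 1 l = 0
        · rw [hw]; exact zero_le
        · have hb := hnb l hS hw
          have hb' : HitP (Ebox Nmax) 1 l :=
            ⟨hb.1, fun k hk => Ebox_mono (Finset.le_sup hl) (hb.2 k hk)⟩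
          rw [Set.indicator_of_mem (show l ∈ {l : List ℤ | HitP (Ebox Nmax) 1 l} from hb')]
      · rw [Set.indicator_of_notMem (show l ∉ {l : List ℤ | HitP Epos 1 l} from hS)]
        exact zero_le
    calc ∑ l ∈ F, Set.indicator {l : List ℤ | HitP Epos 1 l} (pathW V 1) l
        ≤ ∑ l ∈ F, Set.indicator {l : List ℤ | HitP (Ebox Nmax) 1 l} (pathW V 1) l :=
          Finset.sum_le_sum hpt
      _ ≤ ∑' l : List ℤ, Set.indicator {l : List ℤ | HitP (Ebox Nmax) 1 l} (pathW V 1) l :=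
          ENNReal.sum_le_tsum F
      _ = HitSum V (Ebox Nmax) 1 := by
          rw [HitSum]
          exact (tsum_subtype {l : List ℤ | HitP (Ebox Nmax) 1 l} (fun l => pathW V 1 l)).symm
      _ ≤ ⨆ N : ℕ, HitSum V (Ebox N) 1 := le_iSup (fun N : ℕ => HitSum V (Ebox N) 1) Nmax
  · exact iSup_le fun N => HitSum_mono V _ _ (Ebox_subset_Epos N) 1

end Exhaust

section RSum
variable (V : ℤ → ℝ)

noncomputable def Ssum : ℝ≥0∞ := ∑' n : ℕ, ENNReal.ofReal (Real.exp (V (n:ℤ)))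

lemma one_le_Ssum (hV0 : V 0 = 0) : 1 ≤ Ssum V := by
  have h := ENNReal.le_tsum (f := fun n : ℕ => ENNReal.ofReal (Real.exp (V (n:ℤ)))) 0
  simpa [Ssum, hV0] using h

lemma iSup_succ_eq {f : ℕ → ℝ≥0∞} (hf : Monotone f) : (⨆ N : ℕ, f (N+1)) = ⨆ N : ℕ, f N :=
  le_antisymm (iSup_le fun n => le_iSup f (n+1))
    (iSup_le fun n => (hf n.le_succ).trans (le_iSup (fun N => f (N+1)) n))

lemma iSup_ofReal_Wscale : (⨆ N : ℕ, ENNReal.ofReal (Wscale V N)) = Ssum V := by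
  have h1 : ∀ N : ℕ, ENNReal.ofReal (Wscale V N)
      = ∑ k ∈ Finset.range N, ENNReal.ofReal (Real.exp (V (k:ℤ))) := by
    intro N
    exact ENNReal.ofReal_sum_of_nonneg (fun i _ => le_of_lt (Real.exp_pos _))
  simp_rw [h1]
  exact (ENNReal.tsum_eq_iSup_nat).symm

lemma HitSum_Epos_eq (P : ℤ → Measure (ℕ → ℤ)) (hP : IsRWInPotential V P) (hV0 : V 0 = 0) :
    HitSum V Epos 1 = 1 - (Ssum V)⁻¹ := by
  rw [HitSum_sup V P hP]
  have hmono : Monotone (fun N : ℕ => HitSum V (Ebox N) 1) :=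
    fun a b hab => HitSum_mono V _ _ (Ebox_mono hab) 1
  rw [← iSup_succ_eq hmono]
  have hval : ∀ N : ℕ, HitSum V (Ebox (N+1)) 1
      = 1 - (ENNReal.ofReal (Wscale V (N+1)))⁻¹ := by
    intro N
    rw [ruin_formula V P hP hV0 (N+1) (by omega)]
    have hpos := Wscale_pos V (N+1) (by omega)
    rw [ENNReal.ofReal_sub _ (by positivity), ENNReal.ofReal_one, one_div,
      ENNReal.ofReal_inv_of_pos hpos]
  simp_rw [hval]
  rw [← ENNReal.sub_iInf, ← ENNReal.inv_iSup]
  congr 1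
  rw [iSup_succ_eq (f := fun N => ENNReal.ofReal (Wscale V N)) ?_, iSup_ofReal_Wscale]
  intro a b hab
  apply ENNReal.ofReal_le_ofReal
  exact Finset.sum_le_sum_of_subset_of_nonneg (Finset.range_subset_range.mpr hab)
    (fun i _ _ => le_of_lt (Real.exp_pos _))

end RSum

section Renewal
variable (V : ℤ → ℝ)

lemma seq_append_right (a : ℤ) (l s : List ℤ) (k : ℕ) :
    seq a (l ++ s) (l.length + k) = seq (seq a l l.length) s k := by
  induction l generalizing a with
  | nil => simp
  | cons b t ih =>
    have h1 : (b :: t).length + k = (t.length + k) + 1 := by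
      simp [List.length_cons]; omega
    rw [h1]
    show seq b (t ++ s) (t.length + k) = _
    rw [ih b]
    rfl

lemma seq_take (a : ℤ) (t : List ℤ) (m k : ℕ) (hm : m ≤ t.length) (hk : k ≤ m) :
    seq a (t.take m) k = seq a t k := by
  conv_rhs => rw [← List.take_append_drop m t]
  rw [seq_append a (t.take m) (t.drop m) k (by rw [List.length_take]; omega)]

/-- the first return decomposition bijection -/
noncomputable def firstRetEquiv :
    {l : List ℤ // RetP 0 l ∧ l ≠ []}
      ≃ (Σ c : ℤ, {l : List ℤ // HitP Epos c l}) × {l : List ℤ // RetP 0 l} := by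
  apply Equiv.symm
  apply Equiv.ofBijective (f := fun y =>
    ⟨y.1.1 :: ((y.1.2 : List ℤ) ++ (y.2 : List ℤ)), by
      constructor
      · -- RetP
        show seq 0 _ _ = 0
        have hlen : (y.1.1 :: ((y.1.2 : List ℤ) ++ (y.2 : List ℤ))).length
            = ((y.1.2 : List ℤ).length + (y.2 : List ℤ).length) + 1 := by simp
        rw [hlen]
        show seq y.1.1 ((y.1.2 : List ℤ) ++ (y.2 : List ℤ))
          ((y.1.2 : List ℤ).length + (y.2 : List ℤ).length) = 0
        rw [seq_append_right, y.1.2.2.1]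
        exact y.2.2
      · simp⟩)
  constructor
  · -- injective
    rintro ⟨⟨c, l₁, h₁⟩, l₂, h₂⟩ ⟨⟨c', l₁', h₁'⟩, l₂', h₂'⟩ heq
    simp only [Subtype.mk.injEq, List.cons.injEq] at heq
    obtain ⟨rfl, happ⟩ := heq
    -- first show lengths of l₁, l₁' are equal
    have hlen : l₁.length = l₁'.length := by
      by_contra hne
      rcases Nat.lt_or_ge l₁.length l₁'.length with hlt | hge
      · have e1 : seq c (l₁ ++ l₂) l₁.length = 0 := by
          rw [seq_append c l₁ l₂ _ le_rfl]; exact h₁.1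
        have e2 : seq c (l₁' ++ l₂') l₁.length ∈ Epos := by
          have := h₁'.2 l₁.length hlt
          rw [seq_append c l₁' l₂' _ (le_of_lt hlt)]
          exact this
        rw [← happ] at e2
        rw [e1] at e2
        exact zero_notmem_Epos e2
      · rcases Nat.lt_or_ge l₁'.length l₁.length with hlt' | hge'
        · have e1 : seq c (l₁' ++ l₂') l₁'.length = 0 := by
            rw [seq_append c l₁' l₂' _ le_rfl]; exact h₁'.1
          have e2 : seq c (l₁ ++ l₂) l₁'.length ∈ Epos := by
            have := h₁.2 l₁'.length hlt'
            rw [seq_append c l₁ l₂ _ (le_of_lt hlt')]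
            exact this
          rw [happ] at e2
          rw [e1] at e2
          exact zero_notmem_Epos e2
        · omega
    obtain ⟨he1, he2⟩ := List.append_inj happ hlen
    subst he1; subst he2
    rfl
  · -- surjective
    rintro ⟨l, hRet, hne⟩
    obtain ⟨c, t, rfl⟩ := List.exists_cons_of_ne_nil hne
    have hex : ∃ k : ℕ, seq c t k = 0 := by
      refine ⟨t.length, ?_⟩
      have : seq 0 (c :: t) (c :: t).length = 0 := hRet
      simpa using this
    set m := Nat.find hex with hm
    have hm0 : seq c t m = 0 := Nat.find_spec hex
    have hmin : ∀ k < m, seq c t k ≠ 0 := fun k hk => Nat.find_min hex hk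
    have hmle : m ≤ t.length := by
      by_contra hgt
      push_neg at hgt
      have : seq 0 (c :: t) (c :: t).length = 0 := hRet
      have ht0 : seq c t t.length = 0 := by simpa using this
      exact hmin t.length hgt ht0 |>.elim
    have hlen1 : (t.take m).length = m := by rw [List.length_take]; omega
    refine ⟨⟨⟨c, t.take m, ?_, ?_⟩, ⟨t.drop m, ?_⟩⟩, ?_⟩
    · -- HitP end
      show seq c (t.take m) (t.take m).length = 0
      rw [hlen1, seq_take c t m m hmle le_rfl]
      exact hm0
    · -- HitP interior
      intro k hk
      rw [hlen1] at hk
      rw [seq_take c t m k hmle (le_of_lt hk)]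
      exact hmin k hk
    · -- RetP of the tail
      show seq 0 (t.drop m) (t.drop m).length = 0
      have hsplit := seq_append_right c (t.take m) (t.drop m) (t.drop m).length
      rw [List.take_append_drop] at hsplit
      rw [hlen1] at hsplit
      have hEnd : seq c (t.take m) (t.take m).length = 0 := by
        rw [hlen1, seq_take c t m m hmle le_rfl]; exact hm0
      rw [hlen1] at hEnd
      rw [hEnd] at hsplit
      have hlen2 : m + (t.drop m).length = t.length := by
        rw [List.length_drop]; omega
      rw [hlen2] at hsplit
      have ht0 : seq c t t.length = 0 := by
        have : seq 0 (c :: t) (c :: t).length = 0 := hRet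
        simpa using this
      rw [← hsplit, ht0]
    · -- Ψ hits l
      apply Subtype.ext
      show c :: (t.take m ++ t.drop m) = c :: t
      rw [List.take_append_drop]

end Renewal

section Renewal2
variable (V : ℤ → ℝ)

noncomputable def Asum : ℝ≥0∞ := ∑' l : {l : List ℤ // RetP 0 l}, pathW V 0 (l : List ℤ)

noncomputable def rsum : ℝ≥0∞ := ∑' c : ℤ, wgt V 0 c * HitSum V Epos c

open Classical in
lemma tsum_subtype_ite {p : List ℤ → Prop} (f : List ℤ → ℝ≥0∞) :
    ∑' l : {l : List ℤ // p l}, f (l : List ℤ)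
      = ∑' l : List ℤ, if p l then f l else 0 := by
  classical
  refine Eq.trans (tsum_subtype {l : List ℤ | p l} f) (tsum_congr fun l => ?_)
  by_cases h : p l
  · rw [Set.indicator_of_mem (show l ∈ {l : List ℤ | p l} from h), if_pos h]
  · rw [Set.indicator_of_notMem (show l ∉ {l : List ℤ | p l} from h), if_neg h]

lemma pathW_psi (y : (Σ c : ℤ, {l : List ℤ // HitP Epos c l}) × {l : List ℤ // RetP 0 l}) :
    pathW V 0 (y.1.1 :: ((y.1.2 : List ℤ) ++ (y.2 : List ℤ)))
      = (wgt V 0 y.1.1 * pathW V y.1.1 (y.1.2 : List ℤ)) * pathW V 0 (y.2 : List ℤ) := by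
  show wgt V 0 y.1.1 * pathW V y.1.1 ((y.1.2 : List ℤ) ++ (y.2 : List ℤ)) = _
  rw [pathW_append, y.1.2.2.1, mul_assoc]

lemma tsum_firstret (h : List ℤ → ℝ≥0∞) :
    (∑' y : (Σ c : ℤ, {l : List ℤ // HitP Epos c l}) × {l : List ℤ // RetP 0 l},
      (wgt V 0 y.1.1 * pathW V y.1.1 (y.1.2 : List ℤ)) * h (y.2 : List ℤ))
      = rsum V * ∑' l : {l : List ℤ // RetP 0 l}, h (l : List ℤ) := by
  rw [ENNReal.tsum_prod (f := fun (a : Σ c : ℤ, {l : List ℤ // HitP Epos c l})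
    (b : {l : List ℤ // RetP 0 l}) =>
      (wgt V 0 a.1 * pathW V a.1 (a.2 : List ℤ)) * h (b : List ℤ))]
  have h1 : ∀ a : Σ c : ℤ, {l : List ℤ // HitP Epos c l},
      (∑' b : {l : List ℤ // RetP 0 l},
        (wgt V 0 a.1 * pathW V a.1 (a.2 : List ℤ)) * h (b : List ℤ))
      = (wgt V 0 a.1 * pathW V a.1 (a.2 : List ℤ))
          * ∑' l : {l : List ℤ // RetP 0 l}, h (l : List ℤ) :=
    fun a => ENNReal.tsum_mul_left
  rw [tsum_congr h1, ENNReal.tsum_mul_right]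
  congr 1
  rw [ENNReal.tsum_sigma']
  refine tsum_congr fun c => ?_
  rw [HitSum, ← ENNReal.tsum_mul_left]

lemma tsum_ret_nonnil (h : List ℤ → ℝ≥0∞) :
    (∑' x : {l : List ℤ // RetP 0 l ∧ l ≠ []}, pathW V 0 (x : List ℤ) * h (x : List ℤ))
      = ∑' y : (Σ c : ℤ, {l : List ℤ // HitP Epos c l}) × {l : List ℤ // RetP 0 l},
          pathW V 0 (y.1.1 :: ((y.1.2 : List ℤ) ++ (y.2 : List ℤ)))
            * h (y.1.1 :: ((y.1.2 : List ℤ) ++ (y.2 : List ℤ))) := by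
  exact (firstRetEquiv.symm.tsum_eq
    (fun x : {l : List ℤ // RetP 0 l ∧ l ≠ []} =>
      pathW V 0 (x : List ℤ) * h (x : List ℤ))).symm

end Renewal2

section Renewal3
variable (V : ℤ → ℝ)

lemma RetP_nil : RetP 0 ([] : List ℤ) := rfl

lemma tsum_ret_split (g : List ℤ → ℝ≥0∞) :
    (∑' l : {l : List ℤ // RetP 0 l}, g (l : List ℤ))
      = g [] + ∑' l : List ℤ, Set.indicator {l : List ℤ | RetP 0 l ∧ l ≠ []} g l := by
  refine Eq.trans (tsum_subtype {l : List ℤ | RetP 0 l} g) ?_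
  have hsplit : {l : List ℤ | RetP 0 l}
      = {l : List ℤ | RetP 0 l ∧ l = []} ∪ {l : List ℤ | RetP 0 l ∧ l ≠ []} := by
    ext l
    simp only [Set.mem_setOf_eq, Set.mem_union]
    tauto
  have hdis : Disjoint {l : List ℤ | RetP 0 l ∧ l = []} {l : List ℤ | RetP 0 l ∧ l ≠ []} := by
    rw [Set.disjoint_left]
    rintro l ⟨_, h1⟩ ⟨_, h2⟩
    exact h2 h1
  rw [hsplit]
  have hind := Set.indicator_union_of_disjoint hdis g
  refine Eq.trans (tsum_congr fun l => congrFun hind l) ?_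
  rw [ENNReal.tsum_add]
  congr 1
  rw [tsum_eq_single ([] : List ℤ)]
  · exact Set.indicator_of_mem
      (show ([] : List ℤ) ∈ {l : List ℤ | RetP 0 l ∧ l = []} from ⟨RetP_nil, rfl⟩) g
  · intro b hb
    exact Set.indicator_of_notMem (fun hc => hb hc.2) g

lemma tsum_ret_codomain (g : List ℤ → ℝ≥0∞) :
    (∑' l : List ℤ, Set.indicator {l : List ℤ | RetP 0 l ∧ l ≠ []} g l)
      = ∑' y : (Σ c : ℤ, {l : List ℤ // HitP Epos c l}) × {l : List ℤ // RetP 0 l},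
          g (y.1.1 :: ((y.1.2 : List ℤ) ++ (y.2 : List ℤ))) := by
  refine Eq.trans (tsum_subtype {l : List ℤ | RetP 0 l ∧ l ≠ []} g).symm ?_
  exact (firstRetEquiv.symm.tsum_eq
    (fun x : {l : List ℤ // RetP 0 l ∧ l ≠ []} => g (x : List ℤ))).symm

lemma pathW_nil_one : pathW V 0 ([] : List ℤ) = 1 := rfl

lemma Asum_eq_one_add : Asum V = 1 + rsum V * Asum V := by
  conv_lhs => rw [Asum]
  rw [tsum_ret_split (fun l => pathW V 0 l), tsum_ret_codomain (fun l => pathW V 0 l),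
    tsum_congr (pathW_psi V), tsum_firstret V (fun l => pathW V 0 l), pathW_nil_one]
  rfl

noncomputable def Bsub (M : ℕ) : ℝ≥0∞ :=
  ∑' l : {l : List ℤ // RetP 0 l},
    Set.indicator {l : List ℤ | l.length ≤ M} (fun l => pathW V 0 l) (l : List ℤ)

lemma Bsub_zero : Bsub V 0 = 1 := by
  rw [Bsub, tsum_eq_single (⟨[], RetP_nil⟩ : {l : List ℤ // RetP 0 l})]
  · rw [Set.indicator_of_mem (show ([] : List ℤ) ∈ {l : List ℤ | l.length ≤ 0} by simp)]
    rfl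
  · intro b hb
    refine Set.indicator_of_notMem (fun hc => ?_) _
    exact hb (Subtype.ext (List.length_eq_zero_iff.mp (Nat.le_zero.mp hc)))

lemma Bsub_rec (M : ℕ) : Bsub V (M+1) ≤ 1 + rsum V * Bsub V M := by
  rw [Bsub,
    tsum_ret_split (fun l => Set.indicator {l : List ℤ | l.length ≤ M+1}
      (fun l => pathW V 0 l) l),
    tsum_ret_codomain (fun l => Set.indicator {l : List ℤ | l.length ≤ M+1}
      (fun l => pathW V 0 l) l)]
  gcongr
  · rw [Set.indicator_of_mem (show ([] : List ℤ) ∈ {l : List ℤ | l.length ≤ M+1} by simp)]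
    exact le_of_eq (pathW_nil_one V)
  rw [Bsub, ← tsum_firstret V (fun l => Set.indicator {l : List ℤ | l.length ≤ M}
    (fun l => pathW V 0 l) l)]
  refine Summable.tsum_le_tsum (fun y => ?_) ENNReal.summable ENNReal.summable
  by_cases h : (y.1.1 :: ((y.1.2 : List ℤ) ++ (y.2 : List ℤ))).length ≤ M + 1
  · rw [Set.indicator_of_mem (show _ ∈ {l : List ℤ | l.length ≤ M+1} from h), pathW_psi V y,
      Set.indicator_of_mem (show (y.2 : List ℤ) ∈ {l : List ℤ | l.length ≤ M} by
        simp only [Set.mem_setOf_eq]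
        simp only [List.length_cons, List.length_append] at h
        omega)]
  · rw [Set.indicator_of_notMem (show _ ∉ {l : List ℤ | l.length ≤ M+1} from h)]
    exact zero_le

lemma Asum_sup : Asum V = ⨆ M : ℕ, Bsub V M := by
  apply le_antisymm
  · rw [Asum, ENNReal.tsum_eq_iSup_sum]
    apply iSup_le
    intro F
    set M := F.sup (fun l : {l : List ℤ // RetP 0 l} => (l : List ℤ).length) with hM
    have h1 : ∀ l ∈ F, pathW V 0 (l : List ℤ)
        ≤ Set.indicator {l : List ℤ | l.length ≤ M} (fun l => pathW V 0 l) (l : List ℤ) := by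
      intro l hl
      have hle : (l : List ℤ).length ≤ M :=
        Finset.le_sup (f := fun l : {l : List ℤ // RetP 0 l} => (l : List ℤ).length) hl
      rw [Set.indicator_of_mem (show (l : List ℤ) ∈ {l : List ℤ | l.length ≤ M} from hle)]
    calc ∑ l ∈ F, pathW V 0 (l : List ℤ)
        ≤ ∑ l ∈ F, Set.indicator {l : List ℤ | l.length ≤ M}
            (fun l => pathW V 0 l) (l : List ℤ) := Finset.sum_le_sum h1
      _ ≤ Bsub V M := ENNReal.sum_le_tsum F
      _ ≤ ⨆ M : ℕ, Bsub V M := le_iSup (fun M => Bsub V M) M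
  · apply iSup_le
    intro M
    rw [Bsub, Asum]
    refine Summable.tsum_le_tsum (fun l => ?_) ENNReal.summable ENNReal.summable
    exact Set.indicator_le_self _ _ _

lemma Asum_eq_inv (hr1 : rsum V ≤ 1) : Asum V = (1 - rsum V)⁻¹ := by
  rcases eq_or_lt_of_le hr1 with heq | hlt
  · rw [← heq, tsub_self, ENNReal.inv_zero]
    by_contra hA
    have hA' : Asum V ≠ ⊤ := hA
    have h := Asum_eq_one_add V
    rw [heq, one_mul, add_comm] at h
    have hlt : Asum V < Asum V + 1 := ENNReal.lt_add_right hA' one_ne_zero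
    rw [← h] at hlt
    exact lt_irrefl _ hlt
  · have hne : 1 - rsum V ≠ 0 := by
      simp only [ne_eq, tsub_eq_zero_iff_le, not_le]
      exact hlt
    have hnetop : 1 - rsum V ≠ ⊤ :=
      (lt_of_le_of_lt tsub_le_self ENNReal.one_lt_top).ne
    set B := (1 - rsum V)⁻¹ with hB
    have hBne : B ≠ ⊤ := by
      rw [hB, ENNReal.inv_ne_top]
      exact hne
    have hBval : (1 - rsum V) * B = 1 := ENNReal.mul_inv_cancel hne hnetop
    have hfix : 1 + rsum V * B = B := by
      have h2 : (1 - rsum V) * B + rsum V * B = B := by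
        rw [← add_mul, tsub_add_cancel_of_le hr1, one_mul]
      calc 1 + rsum V * B = (1 - rsum V) * B + rsum V * B := by rw [hBval]
        _ = B := h2
    have hbd : ∀ M, Bsub V M ≤ B := by
      intro M
      induction M with
      | zero =>
        rw [Bsub_zero]
        calc (1:ℝ≥0∞) = 1 + rsum V * 0 := by rw [mul_zero, add_zero]
          _ ≤ 1 + rsum V * B := by gcongr; exact zero_le
          _ = B := hfix
      | succ M ih =>
        calc Bsub V (M+1) ≤ 1 + rsum V * Bsub V M := Bsub_rec V M
          _ ≤ 1 + rsum V * B := by gcongr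
          _ = B := hfix
    have hAle : Asum V ≤ B := by
      rw [Asum_sup]
      exact iSup_le hbd
    have hAne : Asum V ≠ ⊤ := (lt_of_le_of_lt hAle hBne.lt_top).ne
    have h := Asum_eq_one_add V
    have hmul : rsum V * Asum V ≠ ⊤ :=
      ENNReal.mul_ne_top (lt_of_le_of_lt hr1 ENNReal.one_lt_top).ne hAne
    have h2 : (1 - rsum V) * Asum V = 1 := by
      rw [ENNReal.sub_mul (fun _ _ => hAne), one_mul]
      nth_rewrite 1 [h]
      rw [ENNReal.add_sub_cancel_right hmul]
    calc Asum V = ((1 - rsum V) * B) * Asum V := by rw [hBval, one_mul]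
      _ = B * ((1 - rsum V) * Asum V) := by ring
      _ = B := by rw [h2, mul_one]

end Renewal3

section Symmetry
variable (V : ℤ → ℝ)

lemma seq_neg (a : ℤ) (l : List ℤ) (k : ℕ) :
    seq (-a) (l.map (fun x => -x)) k = - seq a l k := by
  induction l generalizing a k with
  | nil =>
    cases k with
    | zero => rfl
    | succ k => simp [seq]
  | cons b t ih =>
    cases k with
    | zero => rfl
    | succ k => simpa using ih b k

lemma HitP_neg (i : ℤ) (l : List ℤ) :
    HitP Epos (-i) (l.map (fun x => -x)) ↔ HitP Epos i l := by
  constructor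
  · rintro ⟨hend, hmem⟩
    rw [List.length_map, seq_neg, neg_eq_zero] at hend
    refine ⟨hend, fun k hk => ?_⟩
    have := hmem k (by rwa [List.length_map])
    rw [seq_neg] at this
    simp only [Epos, Set.mem_setOf_eq, neg_ne_zero] at this
    exact this
  · rintro ⟨hend, hmem⟩
    refine ⟨?_, fun k hk => ?_⟩
    · rw [List.length_map, seq_neg, neg_eq_zero]
      exact hend
    · rw [List.length_map] at hk
      rw [seq_neg]
      have := hmem k hk
      simp only [Epos, Set.mem_setOf_eq, neg_ne_zero] at this ⊢
      exact this

noncomputable def negEquiv (i : ℤ) :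
    {l : List ℤ // HitP Epos i l} ≃ {l : List ℤ // HitP Epos (-i) l} where
  toFun x := ⟨(x : List ℤ).map (fun x => -x), (HitP_neg i _).mpr x.2⟩
  invFun y := ⟨(y : List ℤ).map (fun x => -x), by
    have := (HitP_neg (-i) (y : List ℤ)).mpr y.2
    simpa [neg_neg] using this⟩
  left_inv x := by
    apply Subtype.ext
    simp [List.map_map, Function.comp_def]
  right_inv y := by
    apply Subtype.ext
    simp [List.map_map, Function.comp_def]

lemma HitSum_neg (hsym : ∀ z : ℤ, V (-1 - z) = V z) (i : ℤ) :
    HitSum V Epos (-i) = HitSum V Epos i := by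
  rw [HitSum, HitSum, ← (negEquiv i).tsum_eq (fun y => pathW V (-i) (y : List ℤ))]
  refine tsum_congr fun x => ?_
  show pathW V (-i) ((x : List ℤ).map (fun x => -x)) = pathW V i (x : List ℤ)
  exact pathW_neg V hsym i (x : List ℤ)

lemma rsum_eq_hitsum (hsym : ∀ z : ℤ, V (-1 - z) = V z) :
    rsum V = HitSum V Epos 1 := by
  rw [rsum, tsum_eq_sum (s := ({1, -1} : Finset ℤ)) ?_]
  · rw [Finset.sum_pair (by omega)]
    have hm1 : (-1 : ℤ) = -(1:ℤ) := rfl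
    rw [hm1, HitSum_neg V hsym 1]
    have e1 : wgt V 0 1 = wgt V 0 (0 + 1) := by norm_num
    have e2 : wgt V 0 (-(1:ℤ)) = wgt V 0 (0 - 1) := by norm_num
    rw [e1, e2, ← add_mul, wgt_add V 0, one_mul]
  · intro c hc
    simp only [Finset.mem_insert, Finset.mem_singleton] at hc
    push_neg at hc
    rw [wgt_other V 0 c (by omega) (by omega), zero_mul]

end Symmetry

section Core

noncomputable def lenEquiv : {l : List ℤ // RetP 0 l}
    ≃ Σ n : ℕ, {l : List ℤ // l.length = n ∧ seq 0 l n = 0} where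
  toFun x := ⟨(x : List ℤ).length, ⟨x.1, rfl, x.2⟩⟩
  invFun y := ⟨y.2.1, show seq 0 (y.2.1 : List ℤ) (y.2.1 : List ℤ).length = 0 by
    rw [y.2.2.1]; exact y.2.2.2⟩
  left_inv x := rfl
  right_inv := by rintro ⟨n, l, rfl, h0⟩; rfl

theorem core_green (V : ℤ → ℝ) (hV0 : V 0 = 0) (hsym : ∀ z : ℤ, V (-1 - z) = V z)
    (P : ℤ → Measure (ℕ → ℤ)) (hP : IsRWInPotential V P) :
    ∫⁻ x, numVisits 0 x ∂(P 0) = Ssum V := by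
  have hms : ∀ n : ℕ, MeasurableSet {w : ℕ → ℤ | w n = 0} :=
    fun n => (measurable_pi_apply n) (measurableSet_singleton 0)
  have h1 : ∫⁻ x, numVisits 0 x ∂(P 0) = ∑' n : ℕ, (P 0) {w | w n = 0} := by
    simp only [numVisits]
    rw [MeasureTheory.lintegral_tsum (fun n => Measurable.aemeasurable ?_)]
    · refine tsum_congr fun n => ?_
      have hfun : (fun x : ℕ → ℤ => if x n = (0:ℤ) then (1:ℝ≥0∞) else 0)
          = Set.indicator {w : ℕ → ℤ | w n = 0} 1 := by
        funext w
        by_cases h : w n = (0:ℤ)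
        · rw [if_pos h, Set.indicator_of_mem (show w ∈ {w : ℕ → ℤ | w n = 0} from h)]
          rfl
        · rw [if_neg h, Set.indicator_of_notMem (show w ∉ {w : ℕ → ℤ | w n = 0} from h)]
      rw [hfun, MeasureTheory.lintegral_indicator_one (hms n)]
    · have hfun : (fun x : ℕ → ℤ => if x n = (0:ℤ) then (1:ℝ≥0∞) else 0)
          = Set.indicator {w : ℕ → ℤ | w n = 0} (fun _ => 1) := by
        funext w
        by_cases h : w n = (0:ℤ)
        · rw [if_pos h, Set.indicator_of_mem (show w ∈ {w : ℕ → ℤ | w n = 0} from h)]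
        · rw [if_neg h, Set.indicator_of_notMem (show w ∉ {w : ℕ → ℤ | w n = 0} from h)]
      rw [hfun]
      exact measurable_const.indicator (hms n)
  have h2 : (∑' n : ℕ, (P 0) {w | w n = 0}) = Asum V := by
    rw [tsum_congr (fun n => meas_eq_tsum_pathW V P hP n)]
    rw [← ENNReal.tsum_sigma' (f := fun y : Σ n : ℕ,
      {l : List ℤ // l.length = n ∧ seq 0 l n = 0} => pathW V 0 (y.2 : List ℤ))]
    exact (lenEquiv.tsum_eq (f := fun y : Σ n : ℕ,
      {l : List ℤ // l.length = n ∧ seq 0 l n = 0} => pathW V 0 (y.2 : List ℤ))).symm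
  have hrs : rsum V = 1 - (Ssum V)⁻¹ := by
    rw [rsum_eq_hitsum V hsym, HitSum_Epos_eq V P hP hV0]
  have hr1 : rsum V ≤ 1 := by
    rw [hrs]
    exact tsub_le_self
  rw [h1, h2, Asum_eq_inv V hr1, hrs,
    ENNReal.sub_sub_cancel ENNReal.one_ne_top (ENNReal.inv_le_one.mpr (one_le_Ssum V hV0)),
    inv_inv]

end Core

section Main
variable (β h f : ℝ) (ω : ℕ → ℝ) (t : ℕ → ℕ)

lemma sparsePot_zero : sparsePot β h f ω t 0 = 0 := by
  rw [sparsePot, if_pos le_rfl]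
  simp [sparsePotNat]

lemma sparsePot_symm : ∀ z : ℤ, sparsePot β h f ω t (-1 - z) = sparsePot β h f ω t z := by
  intro z
  rcases le_or_gt 0 z with hz | hz
  · rw [sparsePot, sparsePot, if_neg (by omega), if_pos hz]
    congr 2
    omega
  · rw [sparsePot, sparsePot, if_pos (by omega), if_neg (by omega)]
    congr 2
    omega

lemma sparsePotNat_eq (n : ℕ) :
    sparsePotNat β h f ω t n
      = (∑ i ∈ Finset.Icc 1 n,
          (β * ω i + h) * Set.indicator (Set.range t) (fun _ => (1 : ℝ)) i) + (-f * n) := by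
  rw [sparsePotNat, Finset.sum_sub_distrib, Finset.sum_const, Nat.card_Icc]
  simp only [Nat.add_sub_cancel, nsmul_eq_mul]
  have hsum : ∑ i ∈ Finset.Icc 1 n,
      (h + β * ω i) * Set.indicator (Set.range t) (fun _ => (1 : ℝ)) i
      = ∑ i ∈ Finset.Icc 1 n,
        (β * ω i + h) * Set.indicator (Set.range t) (fun _ => (1 : ℝ)) i :=
    Finset.sum_congr rfl fun i _ => by ring
  rw [hsum]
  ring

lemma Ssum_sparse :
    Ssum (sparsePot β h f ω t)
      = ∑' n : ℕ, ENNReal.ofReal (Real.exp (∑ i ∈ Finset.Icc 1 n,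
            (β * ω i + h) * Set.indicator (Set.range t) (fun _ => (1 : ℝ)) i))
          * ENNReal.ofReal (Real.exp (-f * n)) := by
  rw [Ssum]
  refine tsum_congr fun n => ?_
  have h1 : sparsePot β h f ω t (n : ℤ) = sparsePotNat β h f ω t n := by
    rw [sparsePot, if_pos (by positivity), Int.toNat_natCast]
  rw [h1, sparsePotNat_eq, Real.exp_add,
    ENNReal.ofReal_mul (le_of_lt (Real.exp_pos _))]

end Main

lemma indicator_measurable (i : ℕ) :
    Measurable (fun t : ℕ → ℕ => Set.indicator (Set.range t) (fun _ => (1 : ℝ)) i) := by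
  have hS : MeasurableSet {t : ℕ → ℕ | i ∈ Set.range t} := by
    have : {t : ℕ → ℕ | i ∈ Set.range t} = ⋃ m : ℕ, (fun t : ℕ → ℕ => t m) ⁻¹' {i} := by
      ext u
      simp [Set.range, eq_comm]
    rw [this]
    exact MeasurableSet.iUnion fun m => (measurable_pi_apply m) (measurableSet_singleton i)
  have hfun : (fun t : ℕ → ℕ => Set.indicator (Set.range t) (fun _ => (1 : ℝ)) i)
      = Set.indicator {t : ℕ → ℕ | i ∈ Set.range t} (fun _ => (1 : ℝ)) := by
    funext u
    by_cases hmem : i ∈ Set.range u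
    · rw [Set.indicator_of_mem hmem, Set.indicator_of_mem (show u ∈ _ from hmem)]
    · rw [Set.indicator_of_notMem hmem, Set.indicator_of_notMem (show u ∉ _ from hmem)]
  rw [hfun]
  exact measurable_const.indicator hS


/-- the partially annealed mean number of returns to the origin of the
random walk in sparse random environment with drift `f` equals the grand canonical
partition function of the pinning model:
`E_τ[E_V^{ω,τ}(card{n ≥ 0 : X_n = 0})] = ∑_{n ≥ 0} Z_{n,ω}^{β,h} e^{-f n}`. -/
theorem rwsre_pinning_key_relation (β h f : ℝ) (hβ : 0 ≤ β) (ω : ℕ → ℝ)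
    (Pτ : Measure (ℕ → ℕ)) [IsProbabilityMeasure Pτ]
    (hren : ∀ᵐ t ∂Pτ, t 0 = 0 ∧ StrictMono t)
    (PW : (ℕ → ℕ) → ℤ → Measure (ℕ → ℤ))
    (hPW : ∀ t, IsRWInPotential (sparsePot β h f ω t) (PW t)) :
    (∫⁻ t, (∫⁻ x, numVisits 0 x ∂(PW t 0)) ∂Pτ)
      = ∑' n : ℕ,
          (∫⁻ t, ENNReal.ofReal (Real.exp (∑ i ∈ Finset.Icc 1 n,
            (β * ω i + h) * Set.indicator (Set.range t) (fun _ => (1 : ℝ)) i)) ∂Pτ)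
          * ENNReal.ofReal (Real.exp (-f * n)) := by
  have hmeas : ∀ n : ℕ, Measurable (fun t : ℕ → ℕ =>
      ENNReal.ofReal (Real.exp (∑ i ∈ Finset.Icc 1 n,
        (β * ω i + h) * Set.indicator (Set.range t) (fun _ => (1 : ℝ)) i))) := by
    intro n
    apply ENNReal.measurable_ofReal.comp
    apply Real.measurable_exp.comp
    apply Finset.measurable_sum
    intro i _
    exact (measurable_const.mul (indicator_measurable i))
  have hlhs : ∀ t : ℕ → ℕ, (∫⁻ x, numVisits 0 x ∂(PW t 0))
      = ∑' n : ℕ, ENNReal.ofReal (Real.exp (∑ i ∈ Finset.Icc 1 n,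
          (β * ω i + h) * Set.indicator (Set.range t) (fun _ => (1 : ℝ)) i))
          * ENNReal.ofReal (Real.exp (-f * n)) := by
    intro t
    rw [core_green (sparsePot β h f ω t) (sparsePot_zero β h f ω t)
      (sparsePot_symm β h f ω t) (PW t) (hPW t)]
    exact Ssum_sparse β h f ω t
  rw [lintegral_congr hlhs]
  rw [MeasureTheory.lintegral_tsum (fun n => ((hmeas n).mul_const _).aemeasurable)]
  refine tsum_congr fun n => ?_
  rw [MeasureTheory.lintegral_mul_const _ (hmeas n)]
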